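/- Let w be a tempering function, let C₊, C₋, β₊, β₋ > 0 and α₊, α₋ < 2, and let ν be the associated generalized tempered stable Lévy density. Then ∫_{ℝ \ {0}} min(1, z²) ν(z) dz < ∞; in particular ν is a Lévy density. -/
import Mathlib


open Set Filter MeasureTheory

/-- A tempering function: continuous, nonincreasing on `(0,∞)`, nonnegative,
with limit `1` at `0⁺` and `zⁿ w z → 0` as `z → ∞` for every `n`. -/
def IsTempering (w : ℝ → ℝ) : Prop :=
  ContinuousOn w (Ioi 0) ∧
  (∀ z ∈ Ioi (0:ℝ), 0 ≤ w z) ∧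
  AntitoneOn w (Ioi 0) ∧
  Tendsto w (nhdsWithin 0 (Ioi 0)) (nhds 1) ∧
  (∀ n : ℕ, Tendsto (fun z : ℝ => z ^ n * w z) atTop (nhds 0))

/-- The generalized tempered stable (GTS) Lévy density. -/
noncomputable def gtsDensity (w : ℝ → ℝ) (Cp Cm βp βm αp αm : ℝ) (z : ℝ) : ℝ :=
  if 0 < z then Cp * w (βp * z) / z ^ (1 + αp)
  else if z < 0 then Cm * w (βm * |z|) / |z| ^ (1 + αm)
  else 0

lemma IsTempering.le_one {w : ℝ → ℝ} (hw : IsTempering w) {z : ℝ} (hz : 0 < z) : w z ≤ 1 := by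
  obtain ⟨hc, hnn, hanti, hlim, hdecay⟩ := hw
  refine ge_of_tendsto hlim ?_
  filter_upwards [Ioo_mem_nhdsGT_of_mem ⟨le_refl 0, hz⟩] with y hy
  exact hanti hy.1 hz hy.2.le

lemma gts_key {w : ℝ → ℝ} (hw : IsTempering w) {C β α : ℝ}
    (hC : 0 < C) (hβ : 0 < β) (hα : α < 2) :
    IntegrableOn (fun z : ℝ => min 1 (z ^ 2) * (C * w (β * z) / z ^ (1 + α))) (Ioi 0) := by
  set F : ℝ → ℝ := fun z => min 1 (z ^ 2) * (C * w (β * z) / z ^ (1 + α)) with hF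
  have hwnn : ∀ z : ℝ, 0 < z → 0 ≤ w (β * z) := fun z hz => hw.2.1 _ (mul_pos hβ hz)
  have hFnn : ∀ z : ℝ, 0 < z → 0 ≤ F z := by
    intro z hz
    apply mul_nonneg (le_min zero_le_one (sq_nonneg z))
    exact div_nonneg (mul_nonneg hC.le (hwnn z hz)) (Real.rpow_nonneg hz.le _)
  have hcont : ContinuousOn F (Ioi 0) := by
    apply ContinuousOn.mul
    · exact (continuous_const.min (continuous_pow 2)).continuousOn
    · apply ContinuousOn.div
      · exact continuousOn_const.mul (hw.1.comp (continuous_const.mul continuous_id).continuousOn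
          (fun z hz => mul_pos hβ hz))
      · exact fun z hz => (Real.continuousAt_rpow_const z _ (Or.inl (ne_of_gt hz))).continuousWithinAt
      · exact fun z hz => (Real.rpow_pos_of_pos hz _).ne'
  -- part 1 : Ioc 0 1
  have h1 : IntegrableOn F (Ioc 0 1) := by
    have hg : IntegrableOn (fun z : ℝ => C * z ^ (1 - α)) (Ioc 0 1) := by
      have := intervalIntegral.intervalIntegrable_rpow' (a := 0) (b := 1)
        (r := 1 - α) (by linarith)
      rw [intervalIntegrable_iff, uIoc_of_le (by norm_num : (0:ℝ) ≤ 1)] at this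
      exact this.const_mul C
    refine hg.mono' ((hcont.mono Ioc_subset_Ioi_self).aestronglyMeasurable measurableSet_Ioc) ?_
    rw [ae_restrict_iff' measurableSet_Ioc]
    refine ae_of_all _ (fun z hz => ?_)
    have hz0 : 0 < z := hz.1
    rw [Real.norm_of_nonneg (hFnn z hz0)]
    have step1 : F z ≤ z ^ 2 * (C * 1 / z ^ (1 + α)) := by
      have hd : (0:ℝ) < z ^ (1 + α) := Real.rpow_pos_of_pos hz0 _
      have hw1 : w (β * z) ≤ 1 := hw.le_one (mul_pos hβ hz0)
      have hw0 : 0 ≤ w (β * z) := hwnn z hz0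
      apply mul_le_mul (min_le_right _ _) ?_ ?_ (sq_nonneg z)
      · gcongr
      · exact div_nonneg (mul_nonneg hC.le hw0) hd.le
    refine step1.trans (le_of_eq ?_)
    have h2 : (z : ℝ) ^ (1 - α) = z ^ (2:ℝ) / z ^ (1 + α) := by
      rw [← Real.rpow_sub hz0]; congr 1; ring
    rw [mul_one, h2, Real.rpow_two]
    ring
  -- tail setup
  obtain ⟨n, hn⟩ := exists_nat_gt (1 - α)
  have hexp : -(1 + α) - n < -1 := by linarith
  obtain ⟨A, hA⟩ := eventually_atTop.mp ((hw.2.2.2.2 n).eventually_le_const one_pos)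
  set z₀ : ℝ := max 1 (A / β) with hz₀
  have hz₀1 : (1:ℝ) ≤ z₀ := le_max_left _ _
  have hz₀pos : (0:ℝ) < z₀ := lt_of_lt_of_le one_pos hz₀1
  -- part 2 : Ioc 1 z₀
  have h2 : IntegrableOn F (Ioc 1 z₀) := by
    refine ((hcont.mono ?_).integrableOn_Icc).mono_set Ioc_subset_Icc_self
    intro z hz
    exact lt_of_lt_of_le one_pos hz.1
  -- part 3 : Ioi z₀
  have h3 : IntegrableOn F (Ioi z₀) := by
    have hg : IntegrableOn (fun z : ℝ => C * β ^ (-(n:ℝ)) * z ^ (-(1 + α) - n)) (Ioi z₀) :=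
      (integrableOn_Ioi_rpow_of_lt hexp hz₀pos).const_mul _
    refine hg.mono' ((hcont.mono
      (fun z (hz : z ∈ Ioi z₀) => mem_Ioi.mpr (lt_trans hz₀pos hz))).aestronglyMeasurable
      measurableSet_Ioi) ?_
    rw [ae_restrict_iff' measurableSet_Ioi]
    refine ae_of_all _ (fun z hz => ?_)
    have hz1 : (1:ℝ) < z := lt_of_le_of_lt hz₀1 hz
    have hz0 : (0:ℝ) < z := lt_trans one_pos hz1
    have hβz : 0 < β * z := mul_pos hβ hz0
    rw [Real.norm_of_nonneg (hFnn z hz0)]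
    have hAz : A ≤ β * z := by
      have : A / β < z := lt_of_le_of_lt (le_max_right 1 (A / β)) hz
      calc A = β * (A / β) := by field_simp
        _ ≤ β * z := by nlinarith
    have hwb : w (β * z) ≤ (β * z) ^ (-(n:ℝ)) := by
      have h := hA (β * z) hAz
      rw [Real.rpow_neg hβz.le, Real.rpow_natCast, inv_eq_one_div,
        le_div_iff₀ (pow_pos hβz n), mul_comm]
      exact h
    have step1 : F z ≤ C * (β * z) ^ (-(n:ℝ)) / z ^ (1 + α) := by
      refine le_trans (mul_le_of_le_one_left ?_ (min_le_left _ _)) ?_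
      · exact div_nonneg (mul_nonneg hC.le (hwnn z hz0)) (Real.rpow_nonneg hz0.le _)
      · have hd : (0:ℝ) < z ^ (1 + α) := Real.rpow_pos_of_pos hz0 _
        gcongr
    refine step1.trans (le_of_eq ?_)
    have hkey : z ^ (-(1 + α) - (n:ℝ)) = z ^ (-(n:ℝ)) / z ^ (1 + α) := by
      rw [← Real.rpow_sub hz0]; congr 1; ring
    rw [Real.mul_rpow hβ.le hz0.le, hkey]
    ring
  -- combine
  have hsub : Ioi (0:ℝ) ⊆ Ioc 0 1 ∪ (Ioc 1 z₀ ∪ Ioi z₀) := by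
    intro z hz
    rcases le_or_gt z 1 with h | h
    · exact Or.inl ⟨hz, h⟩
    · rcases le_or_gt z z₀ with h' | h'
      · exact Or.inr (Or.inl ⟨h, h'⟩)
      · exact Or.inr (Or.inr h')
  exact (h1.union (h2.union h3)).mono_set hsub

theorem gts_isLevyDensity (w : ℝ → ℝ) (hw : IsTempering w)
    (Cp Cm βp βm αp αm : ℝ)
    (hCp : 0 < Cp) (hCm : 0 < Cm) (hβp : 0 < βp) (hβm : 0 < βm)
    (hαp : αp < 2) (hαm : αm < 2) :
    IntegrableOn (fun z : ℝ => min 1 (z ^ 2) * gtsDensity w Cp Cm βp βm αp αm z)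
      {(0:ℝ)}ᶜ := by
  have hpos : IntegrableOn (fun z : ℝ => min 1 (z ^ 2) * gtsDensity w Cp Cm βp βm αp αm z)
      (Ioi 0) := by
    refine (gts_key hw hCp hβp hαp).congr_fun (fun z hz => ?_) measurableSet_Ioi
    simp only [gtsDensity, if_pos (mem_Ioi.mp hz)]
  have hneg : IntegrableOn (fun z : ℝ => min 1 (z ^ 2) * gtsDensity w Cp Cm βp βm αp αm z)
      (Iio 0) := by
    have hkey := gts_key hw hCm hβm hαm
    have hcomp := (MeasurePreserving.integrableOn_comp_preimage
      (Measure.measurePreserving_neg (volume : Measure ℝ))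
      (Homeomorph.neg ℝ).measurableEmbedding).2 hkey
    have hs : (Neg.neg ⁻¹' (Ioi (0:ℝ))) = Iio 0 := by ext z; simp
    rw [hs] at hcomp
    refine hcomp.congr_fun (fun z hz => ?_) measurableSet_Iio
    have hz0 : z < 0 := hz
    simp only [Function.comp_apply, gtsDensity, if_neg (not_lt.mpr hz0.le), if_pos hz0,
      abs_of_neg hz0, neg_sq]
  rw [← Iio_union_Ioi]
  exact hneg.union hpos
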